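/- Value error from latent abstraction: Fix a finite MDP M = ⟨S, A, R, P, γ⟩ with |R(s,a)| ≤ R_max, an encoder Φ : S → C into a finite code set C, and the pushforward kernel P^Φ(c'|s,a) = Σ_{s'} P(s'|s,a)·1{Φ(s')=c'}. Suppose there exist a Markov kernel P̄(·|c,a) on C and reward R̄(c,a) with |R̄(c,a)| ≤ R_max such that for all (s,a): ‖P^Φ(·|s,a) − P̄(·|Φ(s),a)‖₁ ≤ ε_P and |R(s,a) − R̄(Φ(s),a)| ≤ ε_R. Then for any latent policy π : C → distributions on A, lifting π^Φ(a|s) := π(a|Φ(s)), we have sup_s |V_M^{π^Φ}(s) − V_{M̄}^{π}(Φ(s))| ≤ ε_R/(1−γ) + γ R_max ε_P/(1−γ)², where M̄ = ⟨C, A, R̄, P̄, γ⟩. -/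

import Mathlib

open Finset Filter Topology

/-- The state distribution at time `n` when starting from state `x0`,
following policy `π` and transition kernel `P`. -/
noncomputable def stateDist {X A : Type*} [Fintype X] [Fintype A] [DecidableEq X]
    (P : X → A → X → ℝ) (π : X → A → ℝ) (x0 : X) : ℕ → X → ℝ
  | 0 => fun x => if x = x0 then 1 else 0
  | n + 1 => fun x' => ∑ x, ∑ a, stateDist P π x0 n x * π x a * P x a x'

/-- The infinite-horizon discounted value of stationary policy `π` in the MDP
with reward `R`, transition kernel `P`, and discount `γ`, starting from `x0`. -/
noncomputable def value {X A : Type*} [Fintype X] [Fintype A] [DecidableEq X]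
    (R : X → A → ℝ) (P : X → A → X → ℝ) (π : X → A → ℝ) (γ : ℝ) (x0 : X) : ℝ :=
  ∑' n : ℕ, γ ^ n * ∑ x, ∑ a, stateDist P π x0 n x * π x a * R x a

/-- The policy Bellman operator. -/
noncomputable def bellmanOp {X A : Type*} [Fintype X] [Fintype A]
    (R : X → A → ℝ) (P : X → A → X → ℝ) (π : X → A → ℝ) (γ : ℝ)
    (V : X → ℝ) : X → ℝ :=
  fun x => ∑ a, π x a * (R x a + γ * ∑ x', P x a x' * V x')

/-- The pushforward transition kernel induced by an encoder `Φ`. -/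
noncomputable def pushKernel {S A C : Type*} [Fintype S] [DecidableEq C]
    (P : S → A → S → ℝ) (Φ : S → C) : S → A → C → ℝ :=
  fun s a c => ∑ s', P s a s' * (if Φ s' = c then 1 else 0)

lemma sum4_swap {ι₁ ι₂ ι₃ ι₄ : Type*} [Fintype ι₁] [Fintype ι₂] [Fintype ι₃] [Fintype ι₄]
    (f : ι₁ → ι₂ → ι₃ → ι₄ → ℝ) :
    ∑ a, ∑ b, ∑ c, ∑ d, f a b c d = ∑ c, ∑ d, ∑ a, ∑ b, f a b c d := by
  have := Finset.sum_comm (s := (univ : Finset (ι₁ × ι₂))) (t := (univ : Finset (ι₃ × ι₄)))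
    (f := fun p q => f p.1 p.2 q.1 q.2)
  simpa [Fintype.sum_prod_type] using this

section aux
variable {X A : Type*} [Fintype X] [Fintype A] [DecidableEq X]
variable (R : X → A → ℝ) (P : X → A → X → ℝ) (π : X → A → ℝ) (γ : ℝ)

lemma stateDist_nonneg (hπ0 : ∀ x a, 0 ≤ π x a) (hP0 : ∀ x a x', 0 ≤ P x a x')
    (x0 : X) : ∀ n x, 0 ≤ stateDist P π x0 n x := by
  intro n
  induction n with
  | zero => intro x; simp only [stateDist]; split <;> norm_num
  | succ n ih =>
    intro x
    simp only [stateDist]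
    exact Finset.sum_nonneg fun y _ => Finset.sum_nonneg fun a _ =>
      mul_nonneg (mul_nonneg (ih y) (hπ0 y a)) (hP0 y a x)

lemma stateDist_sum_one (hπ1 : ∀ x, ∑ a, π x a = 1) (hP1 : ∀ x a, ∑ x', P x a x' = 1)
    (x0 : X) : ∀ n, ∑ x, stateDist P π x0 n x = 1 := by
  intro n
  induction n with
  | zero => simp [stateDist]
  | succ n ih =>
    simp only [stateDist]
    rw [Finset.sum_comm]
    have : ∀ x ∈ Finset.univ, (∑ x' : X, ∑ a, stateDist P π x0 n x * π x a * P x a x')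
        = stateDist P π x0 n x := by
      intro x _
      rw [Finset.sum_comm]
      calc ∑ a, ∑ x', stateDist P π x0 n x * π x a * P x a x'
          = ∑ a, stateDist P π x0 n x * π x a * ∑ x', P x a x' := by
            simp [Finset.mul_sum]
        _ = ∑ a, stateDist P π x0 n x * π x a := by simp [hP1]
        _ = stateDist P π x0 n x * ∑ a, π x a := by rw [Finset.mul_sum]
        _ = stateDist P π x0 n x := by rw [hπ1, mul_one]
    rw [Finset.sum_congr rfl this, ih]

lemma stateDist_succ (x0 : X) (n : ℕ) (x : X) :
    stateDist P π x0 (n + 1) x = ∑ a, ∑ x1, π x0 a * P x0 a x1 * stateDist P π x1 n x := by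
  induction n generalizing x0 x with
  | zero =>
    simp only [stateDist]
    rw [Finset.sum_comm]
    apply Finset.sum_congr rfl; intro a _
    simp [ite_mul, Finset.sum_ite_eq', mul_ite, Finset.sum_ite_eq]
  | succ n ih =>
    calc stateDist P π x0 (n + 2) x
        = ∑ y, ∑ b, stateDist P π x0 (n+1) y * π y b * P y b x := rfl
      _ = ∑ y, ∑ b, ∑ a, ∑ x1,
            π x0 a * P x0 a x1 * stateDist P π x1 n y * π y b * P y b x := by
          apply Finset.sum_congr rfl; intro y _
          apply Finset.sum_congr rfl; intro b _
          rw [ih]; simp [Finset.sum_mul]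
      _ = ∑ a, ∑ x1, ∑ y, ∑ b,
            π x0 a * P x0 a x1 * stateDist P π x1 n y * π y b * P y b x := sum4_swap _
      _ = ∑ a, ∑ x1, π x0 a * P x0 a x1 * stateDist P π x1 (n+1) x := by
          apply Finset.sum_congr rfl; intro a _
          apply Finset.sum_congr rfl; intro x1 _
          show _ = π x0 a * P x0 a x1 * ∑ y, ∑ b, stateDist P π x1 n y * π y b * P y b x
          simp only [Finset.mul_sum]
          apply Finset.sum_congr rfl; intro y _
          apply Finset.sum_congr rfl; intro b _
          ring

/-- per-step expected reward -/
noncomputable def stepR (x0 : X) (n : ℕ) : ℝ :=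
  ∑ x, ∑ a, stateDist P π x0 n x * π x a * R x a

lemma value_eq_tsum_stepR (x0 : X) : value R P π γ x0 = ∑' n, γ ^ n * stepR R P π x0 n := rfl

lemma stepR_zero (x0 : X) : stepR R P π x0 0 = ∑ a, π x0 a * R x0 a := by
  rw [stepR, Finset.sum_comm]
  apply Finset.sum_congr rfl; intro a _
  simp [stateDist, ite_mul, Finset.sum_ite_eq']

lemma stepR_succ (x0 : X) (n : ℕ) :
    stepR R P π x0 (n + 1) = ∑ a, ∑ x1, π x0 a * P x0 a x1 * stepR R P π x1 n := by
  calc stepR R P π x0 (n+1)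
      = ∑ x, ∑ b, ∑ a, ∑ x1,
          π x0 a * P x0 a x1 * stateDist P π x1 n x * π x b * R x b := by
        rw [stepR]
        apply Finset.sum_congr rfl; intro x _
        apply Finset.sum_congr rfl; intro b _
        rw [stateDist_succ]; simp [Finset.sum_mul]
    _ = ∑ a, ∑ x1, ∑ x, ∑ b,
          π x0 a * P x0 a x1 * stateDist P π x1 n x * π x b * R x b := sum4_swap _
    _ = ∑ a, ∑ x1, π x0 a * P x0 a x1 * stepR R P π x1 n := by
        apply Finset.sum_congr rfl; intro a _
        apply Finset.sum_congr rfl; intro x1 _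
        rw [stepR, Finset.mul_sum]
        apply Finset.sum_congr rfl; intro x _
        rw [Finset.mul_sum]
        apply Finset.sum_congr rfl; intro b _
        ring

lemma abs_stepR_le (Rmax : ℝ) (hπ0 : ∀ x a, 0 ≤ π x a) (hπ1 : ∀ x, ∑ a, π x a = 1)
    (hP0 : ∀ x a x', 0 ≤ P x a x') (hP1 : ∀ x a, ∑ x', P x a x' = 1)
    (hR : ∀ x a, |R x a| ≤ Rmax) (x0 : X) (n : ℕ) :
    |stepR R P π x0 n| ≤ Rmax := by
  have hd := stateDist_nonneg P π hπ0 hP0 x0 n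
  calc |stepR R P π x0 n| ≤ ∑ x, |∑ a, stateDist P π x0 n x * π x a * R x a| :=
        Finset.abs_sum_le_sum_abs _ _
    _ ≤ ∑ x, ∑ a, |stateDist P π x0 n x * π x a * R x a| :=
        Finset.sum_le_sum fun x _ => Finset.abs_sum_le_sum_abs _ _
    _ ≤ ∑ x, ∑ a, stateDist P π x0 n x * π x a * Rmax := by
        apply Finset.sum_le_sum; intro x _
        apply Finset.sum_le_sum; intro a _
        rw [abs_mul, abs_of_nonneg (mul_nonneg (hd x) (hπ0 x a))]
        exact mul_le_mul_of_nonneg_left (hR x a) (mul_nonneg (hd x) (hπ0 x a))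
    _ = Rmax := by
        have : ∀ x : X, ∑ a, stateDist P π x0 n x * π x a * Rmax
            = stateDist P π x0 n x * Rmax := by
          intro x
          rw [← Finset.sum_mul, ← Finset.mul_sum, hπ1, mul_one]
        simp only [this, ← Finset.sum_mul, stateDist_sum_one P π hπ1 hP1, one_mul]

lemma summable_value (Rmax : ℝ) (hγ0 : 0 ≤ γ) (hγ1 : γ < 1)
    (hπ0 : ∀ x a, 0 ≤ π x a) (hπ1 : ∀ x, ∑ a, π x a = 1)
    (hP0 : ∀ x a x', 0 ≤ P x a x') (hP1 : ∀ x a, ∑ x', P x a x' = 1)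
    (hR : ∀ x a, |R x a| ≤ Rmax) (x0 : X) :
    Summable (fun n => γ ^ n * stepR R P π x0 n) := by
  apply Summable.of_norm_bounded (g := fun n => γ ^ n * Rmax)
    ((summable_geometric_of_lt_one hγ0 hγ1).mul_right Rmax)
  intro n
  rw [Real.norm_eq_abs, abs_mul, abs_of_nonneg (pow_nonneg hγ0 n)]
  exact mul_le_mul_of_nonneg_left
    (abs_stepR_le R P π Rmax hπ0 hπ1 hP0 hP1 hR x0 n) (pow_nonneg hγ0 n)

lemma abs_value_le (Rmax : ℝ) (hγ0 : 0 ≤ γ) (hγ1 : γ < 1)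
    (hπ0 : ∀ x a, 0 ≤ π x a) (hπ1 : ∀ x, ∑ a, π x a = 1)
    (hP0 : ∀ x a x', 0 ≤ P x a x') (hP1 : ∀ x a, ∑ x', P x a x' = 1)
    (hR : ∀ x a, |R x a| ≤ Rmax) (x0 : X) :
    |value R P π γ x0| ≤ Rmax / (1 - γ) := by
  have hgeo : HasSum (fun n : ℕ => γ ^ n * Rmax) (Rmax / (1 - γ)) := by
    have := (hasSum_geometric_of_lt_one hγ0 hγ1).mul_right Rmax
    simpa [div_eq_mul_inv, mul_comm] using this
  rw [← Real.norm_eq_abs]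
  exact tsum_of_norm_bounded hgeo fun n => by
    rw [Real.norm_eq_abs, abs_mul, abs_of_nonneg (pow_nonneg hγ0 n)]
    exact mul_le_mul_of_nonneg_left
      (abs_stepR_le R P π Rmax hπ0 hπ1 hP0 hP1 hR x0 n) (pow_nonneg hγ0 n)

lemma value_eq_bellman (hsum : ∀ x0 : X, Summable (fun n => γ ^ n * stepR R P π x0 n))
    (x0 : X) : value R P π γ x0 = bellmanOp R P π γ (value R P π γ) x0 := by
  have hv : ∀ x0 : X, value R P π γ x0 = ∑' n, γ ^ n * stepR R P π x0 n := fun _ => rfl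
  rw [hv, Summable.tsum_eq_zero_add (hsum x0)]
  have h1 : ∀ x1 : X, Summable (fun n => γ ^ (n+1) * stepR R P π x1 n) := by
    intro x1
    simpa [pow_succ, mul_comm, mul_assoc, mul_left_comm] using (hsum x1).mul_left γ
  have key : (∑' n : ℕ, γ ^ (n+1) * stepR R P π x0 (n+1))
      = ∑ a, ∑ x1, π x0 a * P x0 a x1 * (γ * value R P π γ x1) := by
    calc (∑' n : ℕ, γ ^ (n+1) * stepR R P π x0 (n+1))
        = ∑' n : ℕ, ∑ a, ∑ x1, π x0 a * P x0 a x1 * (γ ^ (n+1) * stepR R P π x1 n) := by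
          apply tsum_congr; intro n
          rw [stepR_succ, Finset.mul_sum]
          apply Finset.sum_congr rfl; intro a _
          rw [Finset.mul_sum]
          apply Finset.sum_congr rfl; intro x1 _
          ring
      _ = ∑ a, ∑' n : ℕ, ∑ x1, π x0 a * P x0 a x1 * (γ ^ (n+1) * stepR R P π x1 n) := by
          apply Summable.tsum_finsetSum
          intro a _
          apply summable_sum
          intro x1 _
          exact (h1 x1).mul_left _
      _ = ∑ a, ∑ x1, ∑' n : ℕ, π x0 a * P x0 a x1 * (γ ^ (n+1) * stepR R P π x1 n) := by
          apply Finset.sum_congr rfl; intro a _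
          apply Summable.tsum_finsetSum
          intro x1 _
          exact ((h1 x1).mul_left _)
      _ = ∑ a, ∑ x1, π x0 a * P x0 a x1 * (γ * value R P π γ x1) := by
          apply Finset.sum_congr rfl; intro a _
          apply Finset.sum_congr rfl; intro x1 _
          rw [tsum_mul_left, hv]
          rw [← tsum_mul_left (a := γ)]
          congr 1
          apply tsum_congr; intro n; ring
  rw [key, stepR_zero]
  rw [bellmanOp]
  simp only [pow_zero, one_mul]
  rw [← Finset.sum_add_distrib]
  apply Finset.sum_congr rfl; intro a _
  rw [mul_add, Finset.mul_sum, Finset.mul_sum]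
  congr 1
  apply Finset.sum_congr rfl; intro x1 _
  ring
end aux

theorem value_error_latent_abstraction
    {S A C : Type*} [Fintype S] [Fintype A] [Fintype C] [DecidableEq S] [DecidableEq C]
    (R : S → A → ℝ) (P : S → A → S → ℝ) (Φ : S → C)
    (Rbar : C → A → ℝ) (Pbar : C → A → C → ℝ) (π : C → A → ℝ)
    (γ Rmax εR εP : ℝ) (hγ0 : 0 ≤ γ) (hγ1 : γ < 1)
    (hπ0 : ∀ c a, 0 ≤ π c a) (hπ1 : ∀ c, ∑ a, π c a = 1)
    (hP0 : ∀ s a s', 0 ≤ P s a s') (hP1 : ∀ s a, ∑ s', P s a s' = 1)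
    (hPbar0 : ∀ c a c', 0 ≤ Pbar c a c') (hPbar1 : ∀ c a, ∑ c', Pbar c a c' = 1)
    (hR : ∀ s a, |R s a| ≤ Rmax) (hRbar : ∀ c a, |Rbar c a| ≤ Rmax)
    (hεP : ∀ s a, ∑ c', |pushKernel P Φ s a c' - Pbar (Φ s) a c'| ≤ εP)
    (hεR : ∀ s a, |R s a - Rbar (Φ s) a| ≤ εR) :
    ∀ s, |value R P (fun s a => π (Φ s) a) γ s - value Rbar Pbar π γ (Φ s)| ≤
      εR / (1 - γ) + γ * Rmax * εP / (1 - γ) ^ 2 := by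
  intro s
  set πΦ : S → A → ℝ := fun s a => π (Φ s) a with hπΦ
  set V : S → ℝ := value R P πΦ γ with hV
  set W : C → ℝ := value Rbar Pbar π γ with hW
  have h1γ : 0 < 1 - γ := by linarith
  -- basic positivity facts
  have hA : Nonempty A := by
    by_contra h
    rw [not_nonempty_iff] at h
    have := hπ1 (Φ s)
    rw [Finset.univ_eq_empty, Finset.sum_empty] at this
    norm_num at this
  obtain ⟨a0⟩ := hA
  have hRmax : 0 ≤ Rmax := le_trans (abs_nonneg _) (hR s a0)
  have hεR0 : 0 ≤ εR := le_trans (abs_nonneg _) (hεR s a0)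
  have hεP0 : 0 ≤ εP :=
    le_trans (Finset.sum_nonneg fun c _ => abs_nonneg _) (hεP s a0)
  -- policy lift facts
  have hπΦ0 : ∀ x a, 0 ≤ πΦ x a := fun x a => hπ0 (Φ x) a
  have hπΦ1 : ∀ x, ∑ a, πΦ x a = 1 := fun x => hπ1 (Φ x)
  -- summability and fixed points
  have hsumS : ∀ x0 : S, Summable (fun n => γ ^ n * stepR R P πΦ x0 n) :=
    summable_value R P πΦ γ Rmax hγ0 hγ1 hπΦ0 hπΦ1 hP0 hP1 hR
  have hsumC : ∀ c0 : C, Summable (fun n => γ ^ n * stepR Rbar Pbar π c0 n) :=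
    summable_value Rbar Pbar π γ Rmax hγ0 hγ1 hπ0 hπ1 hPbar0 hPbar1 hRbar
  have hVfix : ∀ x, V x = bellmanOp R P πΦ γ V x :=
    value_eq_bellman R P πΦ γ hsumS
  have hWfix : ∀ c, W c = bellmanOp Rbar Pbar π γ W c :=
    value_eq_bellman Rbar Pbar π γ hsumC
  set B : ℝ := Rmax / (1 - γ) with hBdef
  have hB : 0 ≤ B := div_nonneg hRmax (le_of_lt h1γ)
  have hWle : ∀ c, |W c| ≤ B :=
    abs_value_le Rbar Pbar π γ Rmax hγ0 hγ1 hπ0 hπ1 hPbar0 hPbar1 hRbar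
  -- maximizer of the error
  obtain ⟨t, _, ht⟩ := Finset.exists_max_image (Finset.univ : Finset S)
    (fun x => |V x - W (Φ x)|) ⟨s, Finset.mem_univ s⟩
  set D : ℝ := |V t - W (Φ t)| with hDdef
  have hD0 : 0 ≤ D := abs_nonneg _
  have hDle : ∀ x : S, |V x - W (Φ x)| ≤ D := fun x => ht x (Finset.mem_univ x)
  -- key one-step estimate
  have key : ∀ x : S, |V x - W (Φ x)| ≤ εR + γ * (εP * B) + γ * D := by
    intro x
    have expand : V x - W (Φ x)
        = ∑ a, π (Φ x) a * ((R x a - Rbar (Φ x) a)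
            + γ * ((∑ s', P x a s' * (V s' - W (Φ s')))
                + ∑ c', (pushKernel P Φ x a c' - Pbar (Φ x) a c') * W c')) := by
      rw [hVfix x, hWfix (Φ x), bellmanOp, bellmanOp, ← Finset.sum_sub_distrib]
      apply Finset.sum_congr rfl; intro a _
      have hpush : (∑ c', pushKernel P Φ x a c' * W c') = ∑ s', P x a s' * W (Φ s') := by
        simp only [pushKernel, Finset.sum_mul]
        rw [Finset.sum_comm]
        apply Finset.sum_congr rfl; intro s' _
        simp [ite_mul, Finset.sum_ite_eq]
      have hsplit : (∑ s', P x a s' * V s') - ∑ c', Pbar (Φ x) a c' * W c'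
          = (∑ s', P x a s' * (V s' - W (Φ s')))
            + ∑ c', (pushKernel P Φ x a c' - Pbar (Φ x) a c') * W c' := by
        simp only [mul_sub, sub_mul, Finset.sum_sub_distrib, hpush]
        ring
      rw [← hsplit]
      ring
    rw [expand]
    calc |∑ a, π (Φ x) a * ((R x a - Rbar (Φ x) a)
            + γ * ((∑ s', P x a s' * (V s' - W (Φ s')))
                + ∑ c', (pushKernel P Φ x a c' - Pbar (Φ x) a c') * W c'))|
        ≤ ∑ a, |π (Φ x) a * ((R x a - Rbar (Φ x) a)
            + γ * ((∑ s', P x a s' * (V s' - W (Φ s')))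
                + ∑ c', (pushKernel P Φ x a c' - Pbar (Φ x) a c') * W c'))| :=
          Finset.abs_sum_le_sum_abs _ _
      _ ≤ ∑ a, π (Φ x) a * (εR + γ * (D + εP * B)) := by
          apply Finset.sum_le_sum; intro a _
          rw [abs_mul, abs_of_nonneg (hπ0 (Φ x) a)]
          apply mul_le_mul_of_nonneg_left _ (hπ0 (Φ x) a)
          have hb1 : |∑ s', P x a s' * (V s' - W (Φ s'))| ≤ D := by
            calc |∑ s', P x a s' * (V s' - W (Φ s'))|
                ≤ ∑ s', |P x a s' * (V s' - W (Φ s'))| := Finset.abs_sum_le_sum_abs _ _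
              _ ≤ ∑ s', P x a s' * D := by
                  apply Finset.sum_le_sum; intro s' _
                  rw [abs_mul, abs_of_nonneg (hP0 x a s')]
                  exact mul_le_mul_of_nonneg_left (hDle s') (hP0 x a s')
              _ = D := by rw [← Finset.sum_mul, hP1, one_mul]
          have hb2 : |∑ c', (pushKernel P Φ x a c' - Pbar (Φ x) a c') * W c'| ≤ εP * B := by
            calc |∑ c', (pushKernel P Φ x a c' - Pbar (Φ x) a c') * W c'|
                ≤ ∑ c', |(pushKernel P Φ x a c' - Pbar (Φ x) a c') * W c'| :=
                  Finset.abs_sum_le_sum_abs _ _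
              _ ≤ ∑ c', |pushKernel P Φ x a c' - Pbar (Φ x) a c'| * B := by
                  apply Finset.sum_le_sum; intro c' _
                  rw [abs_mul]
                  exact mul_le_mul_of_nonneg_left (hWle c') (abs_nonneg _)
              _ = (∑ c', |pushKernel P Φ x a c' - Pbar (Φ x) a c'|) * B :=
                  (Finset.sum_mul _ _ _).symm
              _ ≤ εP * B := mul_le_mul_of_nonneg_right (hεP x a) hB
          calc |(R x a - Rbar (Φ x) a)
              + γ * ((∑ s', P x a s' * (V s' - W (Φ s')))
                  + ∑ c', (pushKernel P Φ x a c' - Pbar (Φ x) a c') * W c')|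
              ≤ |R x a - Rbar (Φ x) a|
                + γ * (|∑ s', P x a s' * (V s' - W (Φ s'))|
                    + |∑ c', (pushKernel P Φ x a c' - Pbar (Φ x) a c') * W c'|) := by
                refine le_trans (abs_add_le _ _) ?_
                gcongr
                rw [abs_mul, abs_of_nonneg hγ0]
                exact mul_le_mul_of_nonneg_left (abs_add_le _ _) hγ0
            _ ≤ εR + γ * (D + εP * B) := by
                have := hεR x a
                gcongr
      _ = εR + γ * (D + εP * B) := by
          rw [← Finset.sum_mul, hπ1, one_mul]
      _ = εR + γ * (εP * B) + γ * D := by ring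
  -- solve for D
  have hDbound : D ≤ (εR + γ * (εP * B)) / (1 - γ) := by
    have := key t
    rw [← hDdef] at this
    rw [le_div_iff₀ h1γ]
    linarith
  have final : |V s - W (Φ s)| ≤ εR / (1 - γ) + γ * Rmax * εP / (1 - γ) ^ 2 := by
    refine le_trans (hDle s) (le_trans hDbound (le_of_eq ?_))
    rw [hBdef]
    field_simp
  exact final
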